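/- arXiv:2208.10202 — 2 statements merged into one kernel-verified Lean document; each statement's English description precedes it below -/
import Mathlib

section
/- Abelian property for fixed toppling stacks: fix M ≥ 1, a function x : (ℤ×ℤ) × ℕ → ℤ with 1 ≤ x(v,i) for all v and i (the amount sent to each neighbour at the i-th toppling of v), and a configuration c : ℤ×ℤ → ℤ. Call a finite list S of vertices a legal stacked stabilising sequence from c if, processing S in order and toppling a vertex v for its i-th occurrence with amount x(v,i), every toppled vertex has value at least 4M at the moment it topples, and the resulting configuration has all values strictly below 4M. Then any two legal stacked stabilising sequences S and S' from c contain every vertex v the same number of times (the occurrence count of v in S equals that in S'), and they produce the same final configuration. -/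
/-- Configurations: finitely supported functions on `ℤ × ℤ` with integer values. -/
abbrev Config := (ℤ × ℤ) →₀ ℤ

/-- The four neighbours of a vertex `v = (x, y)` in `ℤ × ℤ`. -/
def nbrs (v : ℤ × ℤ) : Finset (ℤ × ℤ) :=
  {(v.1 + 1, v.2), (v.1 - 1, v.2), (v.1, v.2 + 1), (v.1, v.2 - 1)}

/-- The amount-`k` toppling at `v`: `c − 4k·𝟙_v + k·Σ_{w∼v} 𝟙_w`. -/
noncomputable def topp (k : ℤ) (v : ℤ × ℤ) (c : Config) : Config :=
  c - Finsupp.single v (4 * k) + ∑ w ∈ nbrs v, Finsupp.single w k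


/-- `S` is a legal stacked toppling sequence from `c` with toppling counts `cnt`:
processing `S` in order, a vertex `v` toppling for its `i`-th occurrence uses amount
`x(v, i)`, and every toppled vertex has value at least `4M` at the moment it topples. -/
def stackedLegal (M : ℕ) (x : (ℤ × ℤ) × ℕ → ℤ) :
    List (ℤ × ℤ) → Config → ((ℤ × ℤ) → ℕ) → Prop
  | [], _, _ => True
  | v :: S, c, cnt =>
      (4 * M : ℤ) ≤ c v ∧
        stackedLegal M x S (topp (x (v, cnt v)) v c) (Function.update cnt v (cnt v + 1))

/-- The configuration obtained by processing the list `S` in order, toppling a vertex `v`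
for its `i`-th occurrence with amount `x(v, i)`. -/
noncomputable def stackedRun (x : (ℤ × ℤ) × ℕ → ℤ) :
    List (ℤ × ℤ) → Config → ((ℤ × ℤ) → ℕ) → Config
  | [], c, _ => c
  | v :: S, c, cnt => stackedRun x S (topp (x (v, cnt v)) v c) (Function.update cnt v (cnt v + 1))

/-- `c` is stable for threshold `T`: every vertex has value `< T`. -/
def stable (T : ℤ) (c : Config) : Prop := ∀ v, c v < T

lemma topp_comm (k m : ℤ) (v w : ℤ × ℤ) (c : Config) :
    topp k v (topp m w c) = topp m w (topp k v c) := by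
  simp only [topp]; abel

lemma topp_apply_ne {k : ℤ} (hk : 0 ≤ k) {v w : ℤ × ℤ} (h : v ≠ w) (c : Config) :
    c w ≤ topp k v c w := by
  have h1 : (Finsupp.single v (4 * k)) w = 0 := Finsupp.single_eq_of_ne' h
  have h2 : (0:ℤ) ≤ (∑ u ∈ nbrs v, Finsupp.single u k) w := by
    rw [Finsupp.finset_sum_apply]
    refine Finset.sum_nonneg fun u _ => ?_
    rw [Finsupp.single_apply]
    split <;> simp [hk]
  simp only [topp, Finsupp.add_apply, Finsupp.sub_apply, h1]
  linarith

lemma run_perm (x : (ℤ × ℤ) × ℕ → ℤ) : ∀ {S S' : List (ℤ × ℤ)}, S.Perm S' →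
    ∀ c cnt, stackedRun x S c cnt = stackedRun x S' c cnt := by
  intro S S' h
  induction h with
  | nil => intro c cnt; rfl
  | cons a _ ih => intro c cnt; exact ih _ _
  | swap a b l =>
    intro c cnt
    by_cases hab : a = b
    · subst hab; rfl
    · simp only [stackedRun]
      rw [Function.update_of_ne hab, Function.update_of_ne (Ne.symm hab),
          topp_comm, Function.update_comm (Ne.symm hab)]
  | trans _ _ ih1 ih2 => intro c cnt; rw [ih1, ih2]

lemma run_mono (x : (ℤ × ℤ) × ℕ → ℤ) (hx : ∀ v i, 1 ≤ x (v, i)) (v : ℤ × ℤ) :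
    ∀ (S : List (ℤ × ℤ)) (c : Config) (cnt : (ℤ × ℤ) → ℕ), v ∉ S →
      c v ≤ stackedRun x S c cnt v := by
  intro S
  induction S with
  | nil => intro c cnt _; exact le_refl _
  | cons u S ih =>
    intro c cnt hv
    have hu : u ≠ v := by rintro rfl; exact hv (List.mem_cons_self)
    calc c v ≤ topp (x (u, cnt u)) u c v :=
          topp_apply_ne (le_trans zero_le_one (hx u (cnt u))) hu c
      _ ≤ _ := ih _ _ (fun h => hv (List.mem_cons_of_mem _ h))

lemma exists_split {v : ℤ × ℤ} : ∀ {S : List (ℤ × ℤ)}, v ∈ S →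
    ∃ A B, S = A ++ v :: B ∧ v ∉ A := by
  intro S
  induction S with
  | nil => simp
  | cons u S ih =>
    intro h
    by_cases huv : u = v
    · exact ⟨[], S, by simp [huv], by simp⟩
    · have hvS : v ∈ S := by
        rcases List.mem_cons.mp h with h' | h'
        · exact absurd h'.symm huv
        · exact h'
      obtain ⟨A, B, rfl, hA⟩ := ih hvS
      exact ⟨u :: A, B, rfl, by simp [hA, Ne.symm huv]⟩

lemma move_front (x : (ℤ × ℤ) × ℕ → ℤ) (hx : ∀ v i, 1 ≤ x (v, i)) (M : ℕ)
    (v : ℤ × ℤ) (B : List (ℤ × ℤ)) :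
    ∀ (A : List (ℤ × ℤ)) (c : Config) (cnt : (ℤ × ℤ) → ℕ), v ∉ A →
      (4 * M : ℤ) ≤ c v → stackedLegal M x (A ++ v :: B) c cnt →
      stackedLegal M x (v :: (A ++ B)) c cnt := by
  intro A
  induction A with
  | nil => intro c cnt _ hv h; exact h
  | cons a A ih =>
    intro c cnt hvA hv h
    obtain ⟨ha, h2⟩ := h
    have hav : a ≠ v := by rintro rfl; exact hvA (List.mem_cons_self)
    have hnn : (0:ℤ) ≤ x (a, cnt a) := le_trans zero_le_one (hx _ _)
    have hv' : (4 * M : ℤ) ≤ topp (x (a, cnt a)) a c v :=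
      le_trans hv (topp_apply_ne hnn hav c)
    have hvA' : v ∉ A := fun h' => hvA (List.mem_cons_of_mem _ h')
    obtain ⟨_, h3⟩ := ih _ _ hvA' hv' h2
    -- h3 : legal (A ++ B) from topp xv v (topp xa a c), update (update cnt a _) v _
    refine ⟨hv, ?_, ?_⟩
    · exact le_trans ha (topp_apply_ne (le_trans zero_le_one (hx _ _)) (Ne.symm hav) c)
    · rw [Function.update_of_ne hav]
      rw [Function.update_of_ne (Ne.symm hav), topp_comm, Function.update_comm hav] at h3
      exact h3

lemma count_le (x : (ℤ × ℤ) × ℕ → ℤ) (hx : ∀ v i, 1 ≤ x (v, i)) (M : ℕ) :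
    ∀ (L S : List (ℤ × ℤ)) (c : Config) (cnt : (ℤ × ℤ) → ℕ),
      stackedLegal M x S c cnt → stable (4 * M) (stackedRun x S c cnt) →
      stackedLegal M x L c cnt → ∀ v, L.count v ≤ S.count v := by
  intro L
  induction L with
  | nil => simp
  | cons u L ih =>
    intro S c cnt hS hstab hL v
    obtain ⟨hu, hL'⟩ := hL
    have huS : u ∈ S := by
      by_contra h
      exact absurd (hstab u) (not_lt.mpr (le_trans hu (run_mono x hx u S c cnt h)))
    obtain ⟨A, B, rfl, hA⟩ := exists_split huS
    obtain ⟨_, htail⟩ := move_front x hx M u B A c cnt hA hu hS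
    have hperm : (A ++ u :: B).Perm (u :: (A ++ B)) := List.perm_middle
    have hstab' : stable (4 * M)
        (stackedRun x (A ++ B) (topp (x (u, cnt u)) u c) (Function.update cnt u (cnt u + 1))) := by
      have he := run_perm x hperm c cnt
      intro w
      have : stackedRun x (u :: (A ++ B)) c cnt = stackedRun x (A ++ B)
          (topp (x (u, cnt u)) u c) (Function.update cnt u (cnt u + 1)) := rfl
      rw [← this, ← he]
      exact hstab w
    have hle := ih (A ++ B) _ _ htail hstab' hL' v
    by_cases hv : v = u
    · subst hv
      simp only [List.count_cons_self, List.count_append] at hle ⊢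
      omega
    · simp only [List.count_cons_of_ne (Ne.symm hv), List.count_append,
        List.count_cons_of_ne (Ne.symm hv)] at hle ⊢
      omega

/-- Abelian property for fixed toppling stacks: any two legal stacked stabilising
sequences from `c` contain every vertex the same number of times, and produce the same
final configuration. -/
theorem abelian_stacked (M : ℕ) (hM : 1 ≤ M) (x : (ℤ × ℤ) × ℕ → ℤ)
    (hx : ∀ v i, 1 ≤ x (v, i)) (c : Config) (S S' : List (ℤ × ℤ))
    (hS : stackedLegal M x S c (fun _ => 0))
    (hS' : stackedLegal M x S' c (fun _ => 0))
    (hSstab : stable (4 * M) (stackedRun x S c (fun _ => 0)))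
    (hS'stab : stable (4 * M) (stackedRun x S' c (fun _ => 0))) :
    (∀ v, S.count v = S'.count v) ∧
      stackedRun x S c (fun _ => 0) = stackedRun x S' c (fun _ => 0) := by
  have hcount : ∀ v, S.count v = S'.count v := fun v =>
    le_antisymm (count_le x hx M S S' c (fun _ => 0) hS' hS'stab hS v)
      (count_le x hx M S' S c (fun _ => 0) hS hSstab hS' v)
  have hcount' : ∀ a : ℤ × ℤ, @List.count _ instBEqOfDecidableEq a S = @List.count _ instBEqOfDecidableEq a S' := by
    intro a
    have h1 : ∀ l : List (ℤ × ℤ), @List.count _ instBEqOfDecidableEq a l = l.count a := by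
      intro l
      induction l with
      | nil => rfl
      | cons b l ih =>
          by_cases h : b = a <;> simp [List.count_cons, ih, h, instBEqOfDecidableEq]
    rw [h1, h1, hcount]
  exact ⟨hcount, run_perm x (List.perm_iff_count.mpr hcount) c (fun _ => 0)⟩
end

section
/- Least action principle for the amount-k deterministic model: fix M ≥ 1, k ≥ 1, a configuration c : ℤ×ℤ → ℤ, and a finitely supported function u : ℤ×ℤ → ℕ such that for every vertex v, c(v) − 4k·u(v) + k·Σ_{w∼v} u(w) < 4M (i.e. toppling each vertex v exactly u(v) times with amount k stabilises c for threshold 4M). Then every legal toppling sequence S (amount k, threshold 4M) from c topples each vertex v at most u(v) times: the occurrence count of v in S is at most u(v) for every v. -/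
/-- `S` is a legal toppling sequence (amount `k`, threshold `T`) from `c`:
each toppled vertex is unstable at the time it topples. -/
def legal (k T : ℤ) : List (ℤ × ℤ) → Config → Prop
  | [], _ => True
  | v :: S, c => T ≤ c v ∧ legal k T S (topp k v c)


lemma mem_nbrs_comm (v w : ℤ × ℤ) : w ∈ nbrs v ↔ v ∈ nbrs w := by
  simp [nbrs, Prod.ext_iff]
  omega

lemma topp_apply (k : ℤ) (v w : ℤ × ℤ) (c : Config) :
    topp k v c w = c w - (if w = v then 4 * k else 0) + (if w ∈ nbrs v then k else 0) := by
  have h : (∑ x ∈ nbrs v, Finsupp.single x k) w = (if w ∈ nbrs v then k else 0) := by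
    rw [Finsupp.finset_sum_apply]
    simp only [Finsupp.single_apply]
    rw [Finset.sum_ite_eq' (nbrs v) w (fun _ => k)]
  rw [topp, Finsupp.add_apply, Finsupp.sub_apply, h, Finsupp.single_apply]
  simp [eq_comm]

lemma least_action_aux (M k : ℕ) (hk : 1 ≤ k) (S : List (ℤ × ℤ)) :
    ∀ (c : Config) (u : (ℤ × ℤ) →₀ ℕ),
    (∀ v : ℤ × ℤ,
      c v - 4 * (k : ℤ) * (u v : ℤ) + (k : ℤ) * ∑ w ∈ nbrs v, (u w : ℤ) < 4 * M) →
    legal (k : ℤ) (4 * M) S c → ∀ v : ℤ × ℤ, S.count v ≤ u v := by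
  induction S with
  | nil => simp
  | cons v S ih =>
    intro c u hu hS w
    obtain ⟨hcv, hlegal⟩ := hS
    have hsum0 : (0:ℤ) ≤ (k:ℤ) * ∑ x ∈ nbrs v, (u x : ℤ) :=
      mul_nonneg (by positivity) (Finset.sum_nonneg fun _ _ => Int.natCast_nonneg _)
    have huv : 1 ≤ u v := by
      by_contra h
      have h0 : (u v : ℤ) = 0 := by
        have : u v = 0 := by omega
        simp [this]
      have := hu v
      rw [h0] at this
      linarith
    set u' := u - Finsupp.single v 1 with hu'def
    have hu'c : ∀ x, (u' x : ℤ) = (u x : ℤ) - (if x = v then 1 else 0) := by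
      intro x
      have : u' x = u x - (Finsupp.single v 1) x := Finsupp.tsub_apply u (Finsupp.single v 1) x
      rw [this, Finsupp.single_apply]
      split_ifs with h1 h2 h3
      · subst h2; rw [Nat.cast_sub huv]; simp
      · exact absurd h1.symm h2
      · exact absurd h3.symm h1
      · simp
    have hnew : ∀ x : ℤ × ℤ,
        topp k v c x - 4 * (k:ℤ) * (u' x : ℤ) + (k:ℤ) * ∑ y ∈ nbrs x, (u' y : ℤ) < 4 * M := by
      intro x
      have hsum : ∑ y ∈ nbrs x, (u' y : ℤ)
          = (∑ y ∈ nbrs x, (u y : ℤ)) - (if v ∈ nbrs x then 1 else 0) := by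
        simp only [hu'c]
        rw [Finset.sum_sub_distrib, Finset.sum_ite_eq' (nbrs x) v (fun _ => (1:ℤ))]
      rw [topp_apply, hu'c, hsum]
      have hx := hu x
      simp only [propext (mem_nbrs_comm x v)]
      split_ifs <;> linarith
    have hcount := ih (topp k v c) u' hnew hlegal w
    have hw := hu'c w
    rw [List.count_cons]
    split_ifs with h
    · have h' : w = v := (beq_iff_eq.mp h).symm
      rw [if_pos h'] at hw
      omega
    · have h' : ¬ w = v := fun e => h (beq_iff_eq.mpr e.symm)
      rw [if_neg h'] at hw
      omega

/-- Least action principle for the amount-`k` deterministic model: if toppling each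
vertex `v` exactly `u(v)` times with amount `k` stabilises `c` for threshold `4M`, then
every legal toppling sequence (amount `k`, threshold `4M`) from `c` topples each
vertex `v` at most `u(v)` times. -/
theorem least_action (M k : ℕ) (hM : 1 ≤ M) (hk : 1 ≤ k)
    (c : Config) (u : (ℤ × ℤ) →₀ ℕ)
    (hu : ∀ v : ℤ × ℤ,
      c v - 4 * (k : ℤ) * (u v : ℤ) + (k : ℤ) * ∑ w ∈ nbrs v, (u w : ℤ) < 4 * M)
    (S : List (ℤ × ℤ)) (hS : legal (k : ℤ) (4 * M) S c) :
    ∀ v : ℤ × ℤ, S.count v ≤ u v := by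
  exact least_action_aux M k hk S c u hu hS
end
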